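/- For t ≥ 3 and ij ∈ E(G), the neighborhood in S[G,t] of the vertex {i,j}_t (the contraction of the top-level linking edge) is exactly { ijj...j{j,l}_2 : jl ∈ E(G) } ∪ { jii...i{i,l}_2 : il ∈ E(G) }. -/

import Mathlib

variable {V : Type*}

/-- Adjacency of the generalized Sierpiński graph `S(G,t)` on words of length `t`:
`u` and `v` are adjacent iff there is an index `i` with `u j = v j` for `j < i`,
`u i` adjacent to `v i` in `G`, and `u j = v i`, `v j = u i` for `j > i`. -/
def sierAdj (G : SimpleGraph V) (t : ℕ) (u v : Fin t → V) : Prop :=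
  ∃ i : Fin t, (∀ j, j < i → u j = v j) ∧ G.Adj (u i) (v i) ∧
    ∀ j, i < j → u j = v i ∧ v j = u i

/-- The generalized Sierpiński graph `S(G,t)`. -/
def sier (G : SimpleGraph V) (t : ℕ) : SimpleGraph (Fin t → V) where
  Adj := sierAdj G t
  symm := ⟨by
    rintro u v ⟨i, h1, h2, h3⟩
    exact ⟨i, fun j hj => (h1 j hj).symm, h2.symm,
      fun j hj => ⟨(h3 j hj).2, (h3 j hj).1⟩⟩⟩
  loopless := ⟨by
    rintro u ⟨i, h1, h2, h3⟩
    exact G.loopless.irrefl _ h2⟩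

/-- `linkingAt G t p u v` : `uv` is a linking edge of `S(G,t)` appearing at
(0-indexed) position `p < t - 1`; in the paper's terminology this linking edge is
produced at step `t - p`, and its contraction is a vertex contracted at step `t - p`. -/
def linkingAt (G : SimpleGraph V) (t p : ℕ) (u v : Fin t → V) : Prop :=
  ∃ i : Fin t, i.val = p ∧ i.val + 1 < t ∧ (∀ j, j < i → u j = v j) ∧
    G.Adj (u i) (v i) ∧ ∀ j, i < j → u j = v i ∧ v j = u i

/-- `uv` is a linking edge of `S(G,t)` (an edge appearing at some step `≥ 2`). -/
def linking (G : SimpleGraph V) (t : ℕ) (u v : Fin t → V) : Prop :=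
  ∃ p, linkingAt G t p u v

/-- The equivalence relation on words generated by identifying the two endpoints
of each linking edge. -/
def gasketSetoid (G : SimpleGraph V) (t : ℕ) : Setoid (Fin t → V) :=
  Relation.EqvGen.setoid (linking G t)

/-- The generalized Sierpiński gasket graph `S[G,t]`, obtained from `S(G,t)` by
contracting all linking edges. -/
def gasket (G : SimpleGraph V) (t : ℕ) :
    SimpleGraph (Quotient (gasketSetoid G t)) where
  Adj x y := x ≠ y ∧ ∃ u v, Quotient.mk (gasketSetoid G t) u = x ∧
    Quotient.mk (gasketSetoid G t) v = y ∧ sierAdj G t u v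
  symm := ⟨by
    rintro x y ⟨hxy, u, v, hu, hv, h⟩
    exact ⟨hxy.symm, v, u, hv, hu, (sier G t).adj_symm h⟩⟩
  loopless := ⟨fun _ h => h.1 rfl⟩

/-- The expanded word `i j j ... j`; for `ij ∈ E(G)` its class in `S[G,t]` is the
contracted vertex `{i,j}_t`. -/
def topWord (t : ℕ) (i j : V) : Fin t → V := fun k => if k.val = 0 then i else j

/-- The expanded word `i j j ... j l` (first letter `i`, last letter `l`, `j` in
between); for `jl ∈ E(G)` its class in `S[G,t]` is the vertex `ijj...j{j,l}_2`. -/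
def tailWord (t : ℕ) (i j l : V) : Fin t → V :=
  fun k => if k.val = 0 then i else if k.val = t - 1 then l else j

section Aux

variable {G : SimpleGraph V} {t : ℕ}

lemma linking_symm {u v : Fin t → V} (h : linking G t u v) : linking G t v u := by
  obtain ⟨p, i, h1, h2, h3, h4, h5⟩ := h
  exact ⟨p, i, h1, h2, fun j hj => (h3 j hj).symm, h4.symm,
    fun j hj => ⟨(h5 j hj).2, (h5 j hj).1⟩⟩

/-- Case analysis for `sierAdj` neighbors of a top word. -/
lemma sierAdj_top_cases (ht : 3 ≤ t) (i j : V) (v : Fin t → V)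
    (p : Fin t) (h1 : ∀ k, k < p → topWord t i j k = v k)
    (h2 : G.Adj (topWord t i j p) (v p))
    (h3 : ∀ k, p < k → topWord t i j k = v p ∧ v k = topWord t i j p) :
    (p.val = 0 ∧ v = topWord t j i) ∨
    (p.val = t - 1 ∧ G.Adj j (v p) ∧ v = tailWord t i j (v p)) := by
  rcases eq_or_ne p.val 0 with hp0 | hp0
  · left
    refine ⟨hp0, ?_⟩
    have hup : topWord t i j p = i := by simp [topWord, hp0]
    have hk1 : (⟨1, by omega⟩ : Fin t) > p := by
      simp [Fin.lt_def, hp0]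
    have hvp : v p = j := by
      have := (h3 ⟨1, by omega⟩ hk1).1
      simpa [topWord] using this.symm
    funext k
    rcases eq_or_ne k.val 0 with hk0 | hk0
    · have : k = p := by
        apply Fin.ext; omega
      rw [this, hvp]
      simp [topWord, hp0]
    · have hpk : p < k := by simp [Fin.lt_def, hp0]; omega
      have := (h3 k hpk).2
      rw [this, hup]
      simp [topWord, hk0]
  · have hup : topWord t i j p = j := by simp [topWord, hp0]
    rcases Nat.lt_or_ge p.val (t - 1) with hpt | hpt
    · exfalso
      have hk : p < (⟨t - 1, by omega⟩ : Fin t) := by simp [Fin.lt_def]; omega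
      have hvp : v p = j := by
        have := (h3 ⟨t - 1, by omega⟩ hk).1
        have ht1 : t - 1 ≠ 0 := by omega
        simpa [topWord, ht1] using this.symm
      rw [hup, hvp] at h2
      exact G.loopless.irrefl _ h2
    · right
      have hpt' : p.val = t - 1 := by omega
      refine ⟨hpt', by rwa [hup] at h2, ?_⟩
      funext k
      rcases lt_trichotomy k p with hk | hk | hk
      · have hkv : k.val < t - 1 := by
          have := hk; rw [Fin.lt_def] at this; omega
        have := (h1 k hk).symm
        rw [this]
        rcases eq_or_ne k.val 0 with hk0 | hk0
        · simp [topWord, tailWord, hk0]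
        · simp [topWord, tailWord, hk0, Nat.ne_of_lt hkv]
      · rw [hk]
        have h1' : t - 1 ≠ 0 := by omega
        simp [tailWord, hp0, hpt', h1']
      · exfalso
        rw [Fin.lt_def] at hk
        omega

lemma linking_top (ht : 3 ≤ t) (i j : V) (v : Fin t → V)
    (h : linking G t (topWord t i j) v) : v = topWord t j i := by
  obtain ⟨q, p, hpq, hpt, h1, h2, h3⟩ := h
  rcases sierAdj_top_cases ht i j v p h1 h2 h3 with ⟨_, hv⟩ | ⟨hp, _, _⟩
  · exact hv
  · omega

lemma eqv_top (ht : 3 ≤ t) (i j : V) {u v : Fin t → V}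
    (h : Relation.EqvGen (linking G t) u v) :
    (u = topWord t i j ∨ u = topWord t j i) ↔
    (v = topWord t i j ∨ v = topWord t j i) := by
  induction h with
  | rel a b hab =>
    constructor
    · rintro (rfl | rfl)
      · exact Or.inr (linking_top ht i j b hab)
      · exact Or.inl (linking_top ht j i b hab)
    · rintro (rfl | rfl)
      · exact Or.inr (linking_top ht i j a (linking_symm hab))
      · exact Or.inl (linking_top ht j i a (linking_symm hab))
  | refl a => exact Iff.rfl
  | symm a b _ ih => exact ih.symm
  | trans a b c _ _ ih1 ih2 => exact ih1.trans ih2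

lemma linking_top_top (ht : 3 ≤ t) {i j : V} (hij : G.Adj i j) :
    linking G t (topWord t i j) (topWord t j i) := by
  refine ⟨0, ⟨0, by omega⟩, rfl, ?_,
    fun k hk => absurd hk (by simp [Fin.lt_def]), ?_, ?_⟩
  · show 0 + 1 < t
    omega
  · simpa [topWord] using hij
  · intro k hk
    have hk0 : k.val ≠ 0 := by
      rw [Fin.lt_def] at hk; omega
    simp [topWord, hk0]

lemma mk_eq_top_iff (ht : 3 ≤ t) {i j : V} (hij : G.Adj i j) (u : Fin t → V) :
    Quotient.mk (gasketSetoid G t) u = Quotient.mk (gasketSetoid G t) (topWord t i j) ↔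
    (u = topWord t i j ∨ u = topWord t j i) := by
  rw [Quotient.eq]
  constructor
  · intro h
    exact (eqv_top ht i j h).mpr (Or.inl rfl)
  · rintro (rfl | rfl)
    · exact Relation.EqvGen.refl _
    · exact Relation.EqvGen.symm _ _ <| Relation.EqvGen.rel _ _ <| linking_top_top ht hij

lemma sierAdj_top_tail (ht : 3 ≤ t) (i j l : V) (hjl : G.Adj j l) :
    sierAdj G t (topWord t i j) (tailWord t i j l) := by
  refine ⟨⟨t - 1, by omega⟩, ?_, ?_, ?_⟩
  · intro k hk
    rw [Fin.lt_def] at hk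
    simp only at hk
    rcases eq_or_ne k.val 0 with hk0 | hk0
    · simp [topWord, tailWord, hk0]
    · simp [topWord, tailWord, hk0, Nat.ne_of_lt hk]
  · have h1 : t - 1 ≠ 0 := by omega
    simpa [topWord, tailWord, h1] using hjl
  · intro k hk
    exfalso
    rw [Fin.lt_def] at hk
    simp only at hk
    omega

lemma tail_ne_top_first (ht : 3 ≤ t) {a b l a' b' : V} (h : a ≠ a') :
    tailWord t a b l ≠ topWord t a' b' := by
  intro he
  have := congrFun he ⟨0, by omega⟩
  simp [tailWord, topWord] at this
  exact h this

lemma tail_ne_top_last (ht : 3 ≤ t) {a b l a' b' : V} (h : l ≠ b') :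
    tailWord t a b l ≠ topWord t a' b' := by
  intro he
  have := congrFun he ⟨t - 1, by omega⟩
  have h1 : t - 1 ≠ 0 := by omega
  simp [tailWord, topWord, h1] at this
  exact h this

end Aux

/-- for `t ≥ 3` and `ij ∈ E(G)`, the neighborhood in `S[G,t]` of the
top contracted vertex `{i,j}_t` is exactly
`{ ijj...j{j,l}_2 : jl ∈ E(G) } ∪ { jii...i{i,l}_2 : il ∈ E(G) }`. -/
theorem stmt_19 (G : SimpleGraph V) (t : ℕ) (ht : 3 ≤ t) (i j : V) (hij : G.Adj i j) :
    (gasket G t).neighborSet (Quotient.mk (gasketSetoid G t) (topWord t i j)) =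
      {x | ∃ l, G.Adj j l ∧ x = Quotient.mk (gasketSetoid G t) (tailWord t i j l)} ∪
      {x | ∃ l, G.Adj i l ∧ x = Quotient.mk (gasketSetoid G t) (tailWord t j i l)} := by
  ext x
  simp only [SimpleGraph.mem_neighborSet, Set.mem_union, Set.mem_setOf_eq]
  constructor
  · rintro ⟨hne, u, v, hu, hv, p, h1, h2, h3⟩
    rcases (mk_eq_top_iff ht hij u).mp hu with rfl | rfl
    · rcases sierAdj_top_cases ht i j v p h1 h2 h3 with ⟨_, rfl⟩ | ⟨_, hadj, hveq⟩
      · exact absurd ((((mk_eq_top_iff ht hij _).mpr (Or.inr rfl)).symm).trans hv) hne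
      · refine Or.inl ⟨v p, hadj, ?_⟩
        rw [← hv]
        exact congrArg _ hveq
    · rcases sierAdj_top_cases ht j i v p h1 h2 h3 with ⟨_, rfl⟩ | ⟨_, hadj, hveq⟩
      · exact absurd hv hne
      · refine Or.inr ⟨v p, hadj, ?_⟩
        rw [← hv]
        exact congrArg _ hveq
  · rintro (⟨l, hjl, rfl⟩ | ⟨l, hil, rfl⟩)
    · refine ⟨?_, topWord t i j, tailWord t i j l, rfl, rfl, sierAdj_top_tail ht i j l hjl⟩
      intro h
      rcases (mk_eq_top_iff ht hij _).mp h.symm with he | he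
      · exact tail_ne_top_last ht hjl.ne' he
      · exact tail_ne_top_first ht hij.ne he
    · refine ⟨?_, topWord t j i, tailWord t j i l,
        (mk_eq_top_iff ht hij _).mpr (Or.inr rfl), rfl, sierAdj_top_tail ht j i l hil⟩
      intro h
      rcases (mk_eq_top_iff ht hij _).mp h.symm with he | he
      · exact tail_ne_top_first ht hij.ne' he
      · exact tail_ne_top_last ht hil.ne' he
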